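/- For an invertible matrix W W^T (with W having D columns w_1,...,w_D) and defining A_{-i} = W W^T - w_i w_i^T, if each A_{-i} is invertible then w_⊥^T W^T (W W^T)^{-1} = Σ_{i=1}^D (w_{⊥i} w_i^T A_{-i}^{-1}) / (1 + w_i^T A_{-i}^{-1} w_i). -/

import Mathlib

open Matrix

theorem sherman_morrison_expansion {N D : ℕ}
    (W : Matrix (Fin N) (Fin D) ℝ) (wperp : Fin D → ℝ)
    (hWW : IsUnit (W * Wᵀ).det)
    (A : Fin D → Matrix (Fin N) (Fin N) ℝ)
    (hA : ∀ i, A i = W * Wᵀ - vecMulVec (fun n => W n i) (fun n => W n i))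
    (hAinv : ∀ i, IsUnit (A i).det) :
    (W *ᵥ wperp) ᵥ* (W * Wᵀ)⁻¹
      = ∑ i, (wperp i / (1 + (fun n => W n i) ⬝ᵥ ((A i)⁻¹ *ᵥ (fun n => W n i))))
          • ((fun n => W n i) ᵥ* (A i)⁻¹) := by
  set w : Fin D → Fin N → ℝ := fun i n => W n i with hw
  set c : Fin D → ℝ := fun i => (w i) ⬝ᵥ ((A i)⁻¹ *ᵥ (w i)) with hc
  have hdecomp : ∀ i, W * Wᵀ = A i + vecMulVec (w i) (w i) := by
    intro i; rw [hA i, sub_add_cancel]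
  have hne : ∀ i, 1 + c i ≠ 0 := by
    intro i
    have hdet : (W * Wᵀ).det = (A i).det * (1 + c i) := by
      have h := Matrix.det_add_replicateCol_mul_replicateRow (ι := Unit) (hAinv i) (w i) (w i)
      rw [← vecMulVec_eq, ← hdecomp i] at h
      rw [h]
      congr 1
      rw [det_unique]
      simp only [Matrix.add_apply, Matrix.one_apply_eq, Matrix.mul_apply, Matrix.replicateRow_apply,
        Matrix.replicateCol_apply, hc, dotProduct, Matrix.mulVec, dotProduct, Finset.mul_sum,
        Finset.sum_mul]
      congr 1
      rw [Finset.sum_comm]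
      exact Finset.sum_congr rfl fun x _ => Finset.sum_congr rfl fun j _ => by ring
    intro h0
    rw [h0, mul_zero] at hdet
    exact hWW.ne_zero hdet
  have hkey : ∀ i, ((w i) ᵥ* (A i)⁻¹) ᵥ* (W * Wᵀ) = (1 + c i) • (w i) := by
    intro i
    rw [hdecomp i, vecMul_add, vecMul_vecMul, Matrix.nonsing_inv_mul _ (hAinv i),
      vecMul_one]
    have h2 : (w i ᵥ* (A i)⁻¹) ᵥ* vecMulVec (w i) (w i) = c i • (w i) := by
      funext n
      simp only [vecMul, vecMulVec, dotProduct, Matrix.of_apply, Pi.smul_apply, smul_eq_mul,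
        hc, Matrix.mulVec, dotProduct, Finset.mul_sum, Finset.sum_mul]
      rw [Finset.sum_comm]
      exact Finset.sum_congr rfl fun x _ => Finset.sum_congr rfl fun j _ => by ring
    rw [h2]
    funext n
    simp only [Pi.add_apply, Pi.smul_apply, smul_eq_mul]
    ring
  have hsum : (∑ i, (wperp i / (1 + c i)) • ((w i) ᵥ* (A i)⁻¹)) ᵥ* (W * Wᵀ)
      = ∑ i, (wperp i / (1 + c i)) • (((w i) ᵥ* (A i)⁻¹) ᵥ* (W * Wᵀ)) := by
    funext n
    simp only [vecMul, dotProduct, Finset.sum_apply, Pi.smul_apply, smul_eq_mul,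
      Finset.sum_mul, Finset.mul_sum]
    rw [Finset.sum_comm]
    exact Finset.sum_congr rfl fun _ _ => Finset.sum_congr rfl fun _ _ =>
      Finset.sum_congr rfl fun _ _ => by ring
  have hmain : ((W *ᵥ wperp) ᵥ* (W * Wᵀ)⁻¹) ᵥ* (W * Wᵀ)
      = (∑ i, (wperp i / (1 + c i)) • ((w i) ᵥ* (A i)⁻¹)) ᵥ* (W * Wᵀ) := by
    rw [vecMul_vecMul, Matrix.nonsing_inv_mul _ hWW, vecMul_one, hsum]
    have h3 : ∀ i ∈ (Finset.univ : Finset (Fin D)),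
        (wperp i / (1 + c i)) • (((w i) ᵥ* (A i)⁻¹) ᵥ* (W * Wᵀ)) = wperp i • (w i) := by
      intro i _
      rw [hkey i, smul_smul, div_mul_cancel₀ _ (hne i)]
    rw [Finset.sum_congr rfl h3]
    funext n
    simp only [Matrix.mulVec, dotProduct, Finset.sum_apply, Pi.smul_apply, smul_eq_mul]
    exact Finset.sum_congr rfl fun j _ => by ring
  calc (W *ᵥ wperp) ᵥ* (W * Wᵀ)⁻¹
      = (((W *ᵥ wperp) ᵥ* (W * Wᵀ)⁻¹) ᵥ* (W * Wᵀ)) ᵥ* (W * Wᵀ)⁻¹ := by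
        rw [vecMul_vecMul, vecMul_vecMul, Matrix.mul_nonsing_inv _ hWW, Matrix.mul_one]
    _ = ((∑ i, (wperp i / (1 + c i)) • ((w i) ᵥ* (A i)⁻¹)) ᵥ* (W * Wᵀ)) ᵥ* (W * Wᵀ)⁻¹ := by
        rw [hmain]
    _ = ∑ i, (wperp i / (1 + c i)) • ((w i) ᵥ* (A i)⁻¹) := by
        rw [vecMul_vecMul, Matrix.mul_nonsing_inv _ hWW, vecMul_one]
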